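/- Assume the prime gap result: there exists x₀ such that for all real x ≥ x₀ there is a prime p with x − x^{0.525} ≤ p ≤ x. Then there exists d₀ such that for every integer d ≥ d₀ there exist a positive integer n with 2n ≥ d²/2 − 1.39·d^{1.525} and a subset S of the dihedral group G of order 2n with 1 ∉ S, S = S⁻¹, |S| = d, and every element of G a product of at most two elements of S. In particular DC(d,2) ≥ d²/2 − 1.39·d^{1.525} for all sufficiently large d. -/

import Mathlib

open DihedralGroup in
lemma dihedral_cover_aux {n : ℕ} (A C : Finset (ZMod n))
    (hC0 : (0 : ZMod n) ∉ C)
    (hCsym : ∀ c ∈ C, -c ∈ C)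
    (hRot : ∀ z : ZMod n, z ≠ 0 → z ∈ C ∨ ∃ a ∈ A, ∃ b ∈ A, z = a - b)
    (hRefl : ∀ z : ZMod n, z ∈ A ∨ ∃ a ∈ A, ∃ c ∈ C, z = a + c) :
    ∃ S : Finset (DihedralGroup n),
      (1 : DihedralGroup n) ∉ S ∧ (∀ s ∈ S, s⁻¹ ∈ S) ∧
      S.card = A.card + C.card ∧
      (∀ g : DihedralGroup n, g = 1 ∨ g ∈ S ∨ ∃ a ∈ S, ∃ b ∈ S, g = a * b) := by
  classical
  refine ⟨A.image sr ∪ C.image r, ?_, ?_, ?_, ?_⟩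
  · intro h1
    rcases Finset.mem_union.1 h1 with h | h
    · obtain ⟨a, _, ha⟩ := Finset.mem_image.1 h
      rw [DihedralGroup.one_def] at ha; exact (by injection ha : False)
    · obtain ⟨c, hc, hcc⟩ := Finset.mem_image.1 h
      rw [DihedralGroup.one_def] at hcc
      obtain rfl : c = 0 := by injection hcc
      exact hC0 hc
  · intro s hs
    rcases Finset.mem_union.1 hs with h | h
    · obtain ⟨a, ha, rfl⟩ := Finset.mem_image.1 h
      have : (sr a : DihedralGroup n)⁻¹ = sr a := by
        rw [eq_comm, eq_inv_iff_mul_eq_one, sr_mul_sr, sub_self, ← DihedralGroup.one_def]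
      rw [this]; exact Finset.mem_union_left _ (Finset.mem_image_of_mem _ ha)
    · obtain ⟨c, hc, rfl⟩ := Finset.mem_image.1 h
      have : (r c : DihedralGroup n)⁻¹ = r (-c) := by
        rw [eq_comm, eq_inv_iff_mul_eq_one, r_mul_r, neg_add_cancel, ← DihedralGroup.one_def]
      rw [this]; exact Finset.mem_union_right _ (Finset.mem_image_of_mem _ (hCsym c hc))
  · rw [Finset.card_union_of_disjoint, Finset.card_image_of_injective,
      Finset.card_image_of_injective]
    · intro x y hxy; injection hxy
    · intro x y hxy; injection hxy
    · rw [Finset.disjoint_left]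
      rintro x hx hy
      obtain ⟨a, _, rfl⟩ := Finset.mem_image.1 hx
      obtain ⟨c, _, hcc⟩ := Finset.mem_image.1 hy
      exact absurd hcc (by simp)
  · rintro (z | z)
    · by_cases hz : z = 0
      · exact Or.inl (by rw [hz, DihedralGroup.one_def])
      rcases hRot z hz with h | ⟨a, ha, b, hb, hab⟩
      · exact Or.inr (Or.inl (Finset.mem_union_right _ (Finset.mem_image_of_mem _ h)))
      · refine Or.inr (Or.inr ⟨sr b, Finset.mem_union_left _ (Finset.mem_image_of_mem _ hb),
          sr a, Finset.mem_union_left _ (Finset.mem_image_of_mem _ ha), ?_⟩)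
        rw [sr_mul_sr, hab]
    · rcases hRefl z with h | ⟨a, ha, c, hc, hac⟩
      · exact Or.inr (Or.inl (Finset.mem_union_left _ (Finset.mem_image_of_mem _ h)))
      · refine Or.inr (Or.inr ⟨sr a, Finset.mem_union_left _ (Finset.mem_image_of_mem _ ha),
          r c, Finset.mem_union_right _ (Finset.mem_image_of_mem _ hc), ?_⟩)
        rw [sr_mul_r, hac]


lemma exists_good_sets (q : ℕ) (hq : q.Prime) (hq3 : 3 ≤ q) :
    ∃ A C : Finset (ZMod (q ^ 2 - 1)),
      (0 : ZMod (q ^ 2 - 1)) ∉ C ∧ (∀ c ∈ C, -c ∈ C) ∧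
      A.card ≤ q + 1 ∧ C.card ≤ q - 2 ∧
      (∀ z : ZMod (q ^ 2 - 1), z ≠ 0 → z ∈ C ∨ ∃ a ∈ A, ∃ b ∈ A, z = a - b) ∧
      (∀ z : ZMod (q ^ 2 - 1), z ∈ A ∨ ∃ a ∈ A, ∃ c ∈ C, z = a + c) := by
  classical
  haveI : Fact q.Prime := ⟨hq⟩
  haveI : Fact (1 < q) := ⟨hq.one_lt⟩
  set F := GaloisField q 2 with hF
  haveI : Fintype F := Fintype.ofFinite F
  set N := q ^ 2 - 1 with hN
  -- cardinalities
  have hcardF : Nat.card F = q ^ 2 := GaloisField.card q 2 (by norm_num)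
  have hcardU : Nat.card Fˣ = N := by rw [Nat.card_units, hcardF]
  have hcardM : Nat.card (Multiplicative (ZMod N)) = Nat.card Fˣ := by
    rw [hcardU, Nat.card_congr Multiplicative.toAdd, Nat.card_zmod]
  let e : Multiplicative (ZMod N) ≃* Fˣ := mulEquivOfCyclicCardEq hcardM
  let ι : Fˣ ≃ ZMod N := e.symm.toEquiv.trans Multiplicative.toAdd
  have hι_mul : ∀ u v : Fˣ, ι (u * v) = ι u + ι v := by
    intro u v
    show Multiplicative.toAdd (e.symm (u * v)) = _
    rw [map_mul]
    rfl
  have hι_one : ι 1 = 0 := by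
    show Multiplicative.toAdd (e.symm 1) = 0
    rw [map_one]
    rfl
  have hι_inv : ∀ u : Fˣ, ι u⁻¹ = -ι u := by
    intro u
    have := hι_mul u u⁻¹
    rw [mul_inv_cancel, hι_one] at this
    exact (neg_eq_of_add_eq_zero_right this.symm).symm
  -- ω outside the prime field
  obtain ⟨ω, hω⟩ : ∃ ω : F, ∀ t : ZMod q, algebraMap (ZMod q) F t ≠ ω := by
    by_contra h
    push_neg at h
    obtain ⟨f, hf⟩ : ∃ f : F → ZMod q, ∀ x, algebraMap (ZMod q) F (f x) = x := by
      choose f hf using h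
      exact ⟨f, hf⟩
    have hsurj : Function.Surjective (algebraMap (ZMod q) F) := fun x => ⟨f x, hf x⟩
    have hle := Fintype.card_le_of_surjective _ hsurj
    rw [ZMod.card] at hle
    have : Fintype.card F = q ^ 2 := by rw [← Nat.card_eq_fintype_card, hcardF]
    rw [this] at hle
    nlinarith [hq.two_le]
  -- basis {1, ω}
  have hω0 : ω ≠ 0 := fun h => hω 0 (by rw [map_zero, h])
  have hli : LinearIndependent (ZMod q) ![(1 : F), ω] := by
    rw [linearIndependent_fin2]
    constructor
    · simpa using hω0
    · intro a ha
      simp only [Matrix.cons_val_one, Matrix.head_cons, Matrix.cons_val_zero] at ha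
      have ha0 : a ≠ 0 := by
        rintro rfl
        rw [zero_smul] at ha
        exact one_ne_zero ha.symm
      apply hω a⁻¹
      rw [Algebra.smul_def] at ha
      rw [map_inv₀]
      exact (eq_inv_of_mul_eq_one_right ha).symm
  have hfr : Fintype.card (Fin 2) = Module.finrank (ZMod q) F := by
    rw [GaloisField.finrank q (by norm_num : 2 ≠ 0)]
    simp
  let b : Module.Basis (Fin 2) (ZMod q) F := basisOfLinearIndependentOfCardEqFinrank hli hfr
  have hb : ⇑b = ![(1 : F), ω] := coe_basisOfLinearIndependentOfCardEqFinrank hli hfr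
  have hb0 : b 0 = 1 := by rw [hb]; rfl
  have hb1 : b 1 = ω := by rw [hb]; rfl
  set c0 : F → ZMod q := fun z => b.repr z 0 with hc0def
  set c1 : F → ZMod q := fun z => b.repr z 1 with hc1def
  have hz_eq : ∀ z : F, z = algebraMap (ZMod q) F (c0 z) + algebraMap (ZMod q) F (c1 z) * ω := by
    intro z
    have hsum := b.sum_repr z
    rw [Fin.sum_univ_two, hb0, hb1] at hsum
    have hrw : algebraMap (ZMod q) F (c0 z) + algebraMap (ZMod q) F (c1 z) * ω
        = (b.repr z) 0 • (1 : F) + (b.repr z) 1 • ω := by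
      rw [Algebra.smul_def, Algebra.smul_def, mul_one]
    rw [hrw, hsum]
  have hc1_add : ∀ x y : F, c1 (x + y) = c1 x + c1 y := by
    intro x y; simp [hc1def]
  have hc1_alg : ∀ (a : ZMod q) (x : F), c1 (algebraMap (ZMod q) F a * x) = a * c1 x := by
    intro a x
    rw [← Algebra.smul_def]
    simp [hc1def]
  have hc1_omega : c1 ω = 1 := by
    rw [hc1def, ← hb1]
    simp [Module.Basis.repr_self]
  have hc1_one : c1 (1 : F) = 0 := by
    rw [hc1def, ← hb0]
    simp [Module.Basis.repr_self]
  have hc1_algMap : ∀ t : ZMod q, c1 (algebraMap (ZMod q) F t) = 0 := by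
    intro t
    have : algebraMap (ZMod q) F t = algebraMap (ZMod q) F t * 1 := by ring
    rw [this, hc1_alg, hc1_one, mul_zero]
  have hc1_zero : c1 (0 : F) = 0 := by
    have := hc1_algMap 0
    rwa [map_zero] at this
  -- elements with c1 = 1 have the canonical form
  have hform : ∀ z : F, c1 z = 1 → z = ω + algebraMap (ZMod q) F (c0 z) := by
    intro z h1
    have := hz_eq z
    rw [h1, map_one, one_mul] at this
    exact this.trans (add_comm _ _)
  have hrange : ∀ z : F, c1 z = 0 → ∃ t : ZMod q, algebraMap (ZMod q) F t = z := by
    intro z h0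
    refine ⟨c0 z, ?_⟩
    have := hz_eq z
    rw [h0, map_zero, zero_mul, add_zero] at this
    exact this.symm
  -- main1 : division of two affine elements
  have main1 : ∀ c : F, c1 c ≠ 0 → ∃ x y : ZMod q,
      (ω + algebraMap (ZMod q) F y ≠ 0) ∧ (ω + algebraMap (ZMod q) F x ≠ 0) ∧
      c * (ω + algebraMap (ZMod q) F y) = ω + algebraMap (ZMod q) F x := by
    intro c hc
    set y : ZMod q := (1 - c1 (c * ω)) / c1 c with hy
    set w : F := c * (ω + algebraMap (ZMod q) F y) with hw
    have hc1w : c1 w = 1 := by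
      rw [hw, mul_add, mul_comm c (algebraMap (ZMod q) F y), hc1_add, hc1_alg, hy]
      rw [div_mul_cancel₀ _ hc]
      ring
    have hwform := hform w hc1w
    have haff : ∀ t : ZMod q, ω + algebraMap (ZMod q) F t ≠ 0 := by
      intro t h
      have h1 : c1 (ω + algebraMap (ZMod q) F t) = 1 := by
        rw [hc1_add, hc1_omega, hc1_algMap, add_zero]
      rw [h, hc1_zero] at h1
      exact zero_ne_one h1
    exact ⟨c0 w, y, haff y, haff (c0 w), hwform ▸ hw.symm⟩
  have haff : ∀ t : ZMod q, ω + algebraMap (ZMod q) F t ≠ 0 := by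
    intro t h
    have h1 : c1 (ω + algebraMap (ZMod q) F t) = 1 := by
      rw [hc1_add, hc1_omega, hc1_algMap, add_zero]
    rw [h, hc1_zero] at h1
    exact zero_ne_one h1
  -- main2 : scalar multiple decomposition
  have main2 : ∀ z : F, c1 z ≠ 0 → ∃ lam y : ZMod q, lam ≠ 0 ∧
      z = algebraMap (ZMod q) F lam * (ω + algebraMap (ZMod q) F y) := by
    intro z hz
    refine ⟨c1 z, c0 z / c1 z, hz, ?_⟩
    rw [mul_add, ← map_mul, mul_div_cancel₀ _ hz]
    rw [add_comm]
    exact hz_eq z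
  have hinj : Function.Injective (algebraMap (ZMod q) F) := (algebraMap (ZMod q) F).injective
  -- the unit sets
  set Au : Finset Fˣ := Finset.univ.filter
    (fun u => (u : F) = 1 ∨ ∃ y : ZMod q, (u : F) = ω + algebraMap (ZMod q) F y) with hAu
  set Cu : Finset Fˣ := Finset.univ.filter
    (fun u => (u : F) ≠ 1 ∧ ∃ y : ZMod q, (u : F) = algebraMap (ZMod q) F y) with hCu
  have memAu : ∀ u : Fˣ, u ∈ Au ↔
      ((u : F) = 1 ∨ ∃ y : ZMod q, (u : F) = ω + algebraMap (ZMod q) F y) := by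
    intro u; rw [hAu, Finset.mem_filter]; simp
  have memCu : ∀ u : Fˣ, u ∈ Cu ↔
      ((u : F) ≠ 1 ∧ ∃ y : ZMod q, (u : F) = algebraMap (ZMod q) F y) := by
    intro u; rw [hCu, Finset.mem_filter]; simp
  refine ⟨Au.image ι, Cu.image ι, ?_, ?_, ?_, ?_, ?_, ?_⟩
  · -- 0 ∉ C
    intro h
    obtain ⟨u, hu, hu0⟩ := Finset.mem_image.1 h
    have : u = 1 := ι.injective (by rw [hu0, hι_one])
    rw [this] at hu
    exact ((memCu 1).1 hu).1 Units.val_one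
  · -- symmetric
    intro c hc
    obtain ⟨u, hu, rfl⟩ := Finset.mem_image.1 hc
    rw [← hι_inv u]
    apply Finset.mem_image_of_mem
    obtain ⟨hu1, y, hy⟩ := (memCu u).1 hu
    have hy0 : y ≠ 0 := by
      rintro rfl
      rw [map_zero] at hy
      exact u.ne_zero hy
    rw [memCu]
    constructor
    · rw [Units.val_inv_eq_inv_val]
      exact fun h => hu1 (inv_eq_one.1 h)
    · exact ⟨y⁻¹, by rw [Units.val_inv_eq_inv_val, hy, map_inv₀]⟩
  · -- card A ≤ q + 1
    calc (Au.image ι).card ≤ Au.card := Finset.card_image_le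
      _ = (Au.image (fun u : Fˣ => (u : F))).card :=
          (Finset.card_image_of_injective _ Units.val_injective).symm
      _ ≤ (insert (1 : F)
            (Finset.univ.image (fun y : ZMod q => ω + algebraMap (ZMod q) F y))).card := by
          apply Finset.card_le_card
          intro x hx
          obtain ⟨u, hu, rfl⟩ := Finset.mem_image.1 hx
          rcases (memAu u).1 hu with h | ⟨y, hy⟩
          · rw [h]; exact Finset.mem_insert_self _ _
          · exact Finset.mem_insert_of_mem
              (Finset.mem_image.2 ⟨y, Finset.mem_univ _, hy.symm⟩)
      _ ≤ (Finset.univ.image (fun y : ZMod q => ω + algebraMap (ZMod q) F y)).card + 1 :=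
          Finset.card_insert_le _ _
      _ ≤ (Finset.univ : Finset (ZMod q)).card + 1 :=
          Nat.add_le_add_right Finset.card_image_le 1
      _ = q + 1 := by rw [Finset.card_univ, ZMod.card]
  · -- card C ≤ q - 2
    calc (Cu.image ι).card ≤ Cu.card := Finset.card_image_le
      _ = (Cu.image (fun u : Fˣ => (u : F))).card :=
          (Finset.card_image_of_injective _ Units.val_injective).symm
      _ ≤ ((((Finset.univ : Finset (ZMod q)).erase 1).erase 0).image
            (fun y : ZMod q => algebraMap (ZMod q) F y)).card := by
          apply Finset.card_le_card
          intro x hx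
          obtain ⟨u, hu, rfl⟩ := Finset.mem_image.1 hx
          obtain ⟨hu1, y, hy⟩ := (memCu u).1 hu
          refine Finset.mem_image.2 ⟨y, ?_, hy.symm⟩
          refine Finset.mem_erase.2 ⟨?_, Finset.mem_erase.2 ⟨?_, Finset.mem_univ _⟩⟩
          · rintro rfl
            rw [map_zero] at hy
            exact u.ne_zero hy
          · rintro rfl
            rw [map_one] at hy
            exact hu1 hy
      _ ≤ (((Finset.univ : Finset (ZMod q)).erase 1).erase 0).card := Finset.card_image_le
      _ ≤ q - 2 := by
          rw [Finset.card_erase_of_mem, Finset.card_erase_of_mem (Finset.mem_univ _),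
            Finset.card_univ, ZMod.card]
          · omega
          · exact Finset.mem_erase.2 ⟨zero_ne_one, Finset.mem_univ _⟩
  · -- rotations
    intro z hz
    set u : Fˣ := ι.symm z with hu
    have hzu : ι u = z := ι.apply_symm_apply z
    have hu1 : u ≠ 1 := by
      intro h
      exact hz (by rw [← hzu, h, hι_one])
    by_cases hK : c1 (u : F) = 0
    · left
      apply Finset.mem_image.2
      refine ⟨u, ?_, hzu⟩
      rw [memCu]
      obtain ⟨t, ht⟩ := hrange _ hK
      exact ⟨fun h => hu1 (Units.ext h), ⟨t, ht.symm⟩⟩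
    · right
      obtain ⟨x, y, hy0, hx0, heq⟩ := main1 (u : F) hK
      refine ⟨ι (Units.mk0 _ hx0), Finset.mem_image_of_mem _ ?_,
        ι (Units.mk0 _ hy0), Finset.mem_image_of_mem _ ?_, ?_⟩
      · rw [memAu]; exact Or.inr ⟨x, by rw [Units.val_mk0]⟩
      · rw [memAu]; exact Or.inr ⟨y, by rw [Units.val_mk0]⟩
      · have huab : u = Units.mk0 _ hx0 * (Units.mk0 _ hy0)⁻¹ := by
          apply Units.ext
          rw [Units.val_mul, Units.val_inv_eq_inv_val, Units.val_mk0, Units.val_mk0, ← heq,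
            mul_inv_cancel_right₀ hy0]
        rw [← hzu, huab, hι_mul, hι_inv, sub_eq_add_neg]
  · -- reflections
    intro z
    set u : Fˣ := ι.symm z with hu
    have hzu : ι u = z := ι.apply_symm_apply z
    by_cases hK : c1 (u : F) = 0
    · obtain ⟨t, ht⟩ := hrange _ hK
      by_cases h1 : (u : F) = 1
      · left
        exact Finset.mem_image.2 ⟨u, (memAu u).2 (Or.inl h1), hzu⟩
      · right
        refine ⟨ι 1, Finset.mem_image_of_mem _ ((memAu 1).2 (Or.inl Units.val_one)),
          ι u, Finset.mem_image_of_mem _ ((memCu u).2 ⟨h1, ⟨t, ht.symm⟩⟩), ?_⟩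
        rw [hι_one, zero_add, hzu]
    · obtain ⟨lam, y, hlam, heq⟩ := main2 (u : F) hK
      by_cases hl1 : lam = 1
      · left
        refine Finset.mem_image.2 ⟨u, (memAu u).2 (Or.inr ⟨y, ?_⟩), hzu⟩
        rw [heq, hl1, map_one, one_mul]
      · right
        have hlam0 : algebraMap (ZMod q) F lam ≠ 0 := by
          intro h
          exact hlam (hinj (by rw [h, map_zero]))
        refine ⟨ι (Units.mk0 _ (haff y)), Finset.mem_image_of_mem _ ?_,
          ι (Units.mk0 _ hlam0), Finset.mem_image_of_mem _ ?_, ?_⟩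
        · rw [memAu]; exact Or.inr ⟨y, by rw [Units.val_mk0]⟩
        · rw [memCu]
          refine ⟨?_, ⟨lam, by rw [Units.val_mk0]⟩⟩
          rw [Units.val_mk0]
          intro h
          exact hl1 (hinj (by rw [h, map_one]))
        · have huac : u = Units.mk0 _ (haff y) * Units.mk0 _ hlam0 := by
            apply Units.ext
            rw [Units.val_mul, Units.val_mk0, Units.val_mk0, mul_comm]
            exact heq
          rw [← hzu, huac, hι_mul]

set_option maxHeartbeats 1000000 in
/-- **Theorem (asymptotic lower bound).** Assume the Baker–Harman–Pintz prime gap result: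
there is `x₀` such that every real `x ≥ x₀` has a prime in `[x - x^0.525, x]`. Then for
all sufficiently large `d` there is a dihedral group of order `2n ≥ d²/2 - 1.39·d^1.525`
admitting an inverse-closed, identity-free subset `S` of size exactly `d` such that every
group element is a product of at most two elements of `S`; in particular
`DC(d,2) ≥ d²/2 - 1.39·d^1.525` for all sufficiently large `d`. -/
theorem dihedral_diameter_two_asymptotic_lower_bound
    (primegap : ∃ x₀ : ℝ, ∀ x : ℝ, x₀ ≤ x →
      ∃ p : ℕ, p.Prime ∧ x - x ^ (0.525 : ℝ) ≤ (p : ℝ) ∧ (p : ℝ) ≤ x) :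
    ∃ d₀ : ℕ, ∀ d : ℕ, d₀ ≤ d →
      ∃ n : ℕ, 0 < n ∧
        ((d : ℝ) ^ 2 / 2 - 1.39 * (d : ℝ) ^ (1.525 : ℝ) ≤ (2 * n : ℝ)) ∧
        ∃ S : Finset (DihedralGroup n),
          (1 : DihedralGroup n) ∉ S ∧
          (∀ s ∈ S, s⁻¹ ∈ S) ∧
          S.card = d ∧
          (∀ g : DihedralGroup n, g = 1 ∨ g ∈ S ∨ ∃ a ∈ S, ∃ b ∈ S, g = a * b) := by
  obtain ⟨x₀, hgap⟩ := primegap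
  refine ⟨max 32 (Nat.ceil (2 * x₀)), fun d hd => ?_⟩
  have hd32 : 32 ≤ d := le_trans (le_max_left _ _) hd
  set x : ℝ := (d : ℝ) / 2 with hxdef
  have hdR : (32 : ℝ) ≤ (d : ℝ) := by exact_mod_cast hd32
  have hx16 : (16 : ℝ) ≤ x := by rw [hxdef]; linarith
  have hx0 : (0 : ℝ) < x := by linarith
  have hxx₀ : x₀ ≤ x := by
    have h1 : (2 : ℝ) * x₀ ≤ (Nat.ceil (2 * x₀) : ℝ) := Nat.le_ceil _
    have h2 : (Nat.ceil (2 * x₀) : ℕ) ≤ d := le_trans (le_max_right _ _) hd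
    have h3 : ((Nat.ceil (2 * x₀) : ℕ) : ℝ) ≤ (d : ℝ) := by exact_mod_cast h2
    rw [hxdef]; linarith
  obtain ⟨q, hqprime, hql, hqu⟩ := hgap x hxx₀
  set X : ℝ := x ^ (0.525 : ℝ) with hXdef
  -- basic bounds on X
  have hX1 : (1 : ℝ) ≤ X := by
    have := Real.rpow_le_rpow_of_exponent_le (by linarith : (1:ℝ) ≤ x)
      (by norm_num : (0 : ℝ) ≤ (0.525 : ℝ))
    rwa [Real.rpow_zero] at this
  have hXx2 : X ≤ x / 2 := by
    have h1 : X ≤ x ^ (0.75 : ℝ) :=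
      Real.rpow_le_rpow_of_exponent_le (by linarith) (by norm_num)
    have h2 : x ^ (0.75 : ℝ) ≤ x / 2 := by
      rw [div_eq_mul_inv, mul_comm]
      have h3 : (2 : ℝ) ≤ x ^ (0.25 : ℝ) := by
        calc (2 : ℝ) = 16 ^ ((0.25) : ℝ) := by
              rw [show (16 : ℝ) = 2 ^ (4 : ℕ) by norm_num, ← Real.rpow_natCast 2 4,
                ← Real.rpow_mul (by norm_num)]
              norm_num
          _ ≤ x ^ ((0.25) : ℝ) :=
              Real.rpow_le_rpow (by norm_num) hx16 (by norm_num)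
      calc x ^ (0.75 : ℝ) = x ^ (1 : ℝ) / x ^ (0.25 : ℝ) := by
            rw [← Real.rpow_sub hx0]; norm_num
        _ ≤ x ^ (1 : ℝ) / 2 := by
            apply div_le_div_of_nonneg_left _ (by norm_num) h3
            · positivity
        _ = 2⁻¹ * x := by rw [Real.rpow_one]; ring
    linarith
  have hqlow : x / 2 ≤ (q : ℝ) := by linarith
  have hq8 : 8 ≤ q := by
    have : (8 : ℝ) ≤ (q : ℝ) := by linarith
    exact_mod_cast this
  have hq3 : 3 ≤ q := by omega
  have h2qd : 2 * q ≤ d := by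
    have : ((2 * q : ℕ) : ℝ) ≤ (d : ℝ) := by push_cast; linarith
    exact_mod_cast this
  have hdq2 : d ≤ q ^ 2 - 1 := by
    have h4q : (d : ℝ) ≤ 4 * (q : ℝ) := by linarith
    have hq2 : (4 : ℝ) * (q : ℝ) ≤ (q : ℝ) ^ 2 - 1 := by nlinarith [hq8, (by exact_mod_cast hq8 : (8:ℝ) ≤ (q:ℝ))]
    have : (d : ℝ) ≤ ((q ^ 2 - 1 : ℕ) : ℝ) := by
      rw [Nat.cast_sub (by nlinarith [hq3] : 1 ≤ q ^ 2)]
      push_cast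
      linarith
    exact_mod_cast this
  set n : ℕ := q ^ 2 - 1 with hndef
  have hq2pos : 1 ≤ q ^ 2 := by nlinarith [hq3]
  have hnpos : 0 < n := by rw [hndef]; omega
  have hnR : (n : ℝ) = (q : ℝ) ^ 2 - 1 := by
    rw [hndef, Nat.cast_sub hq2pos]; push_cast; ring
  -- main analytic inequality
  have hpow : (2 : ℝ) ^ (0.475 : ℝ) ≤ 1.39 := by
    have h40 : ((2 : ℝ) ^ (0.475 : ℝ)) ^ (40 : ℕ) = 2 ^ (19 : ℕ) := by
      rw [← Real.rpow_natCast ((2 : ℝ) ^ (0.475 : ℝ)) 40, ← Real.rpow_mul (by norm_num)]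
      rw [show (0.475 : ℝ) * (40 : ℕ) = ((19 : ℕ) : ℝ) by norm_num, Real.rpow_natCast]
    have h1 : ((2 : ℝ) ^ (0.475 : ℝ)) ^ (40 : ℕ) ≤ (1.39 : ℝ) ^ (40 : ℕ) := by
      rw [h40]; norm_num
    exact le_of_pow_le_pow_left₀ (by norm_num) (by norm_num) h1
  have hdpos : (0 : ℝ) < (d : ℝ) := by linarith
  have hXdX : X = (d : ℝ) ^ (0.525 : ℝ) / 2 ^ (0.525 : ℝ) := by
    rw [hXdef, hxdef, Real.div_rpow (by linarith) (by norm_num)]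
  have hd1525 : (d : ℝ) * (d : ℝ) ^ (0.525 : ℝ) = (d : ℝ) ^ (1.525 : ℝ) := by
    rw [show (1.525 : ℝ) = 1 + 0.525 by norm_num, Real.rpow_add hdpos, Real.rpow_one]
  have h4xX : 4 * x * X ≤ 1.39 * (d : ℝ) ^ (1.525 : ℝ) := by
    have : 4 * x * X = (2 : ℝ) ^ (0.475 : ℝ) * (d : ℝ) ^ (1.525 : ℝ) := by
      rw [hXdX, hxdef, ← hd1525]
      rw [show (0.475 : ℝ) = 1 - 0.525 by norm_num, Real.rpow_sub (by norm_num : (0:ℝ) < 2),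
        Real.rpow_one]
      field_simp
      ring
    rw [this]
    have hpos : (0 : ℝ) ≤ (d : ℝ) ^ (1.525 : ℝ) := Real.rpow_nonneg (by linarith) _
    nlinarith
  have hmain : (d : ℝ) ^ 2 / 2 - 1.39 * (d : ℝ) ^ (1.525 : ℝ) ≤ 2 * (n : ℝ) := by
    have hxX0 : 0 ≤ x - X := by linarith
    have hsq : (x - X) ^ 2 ≤ (q : ℝ) ^ 2 := by
      apply pow_le_pow_left₀ hxX0 hql
    have hexp : 2 * (x - X) ^ 2 = (d : ℝ) ^ 2 / 2 - 4 * x * X + 2 * X ^ 2 := by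
      rw [hxdef]; ring
    have hX2 : (2 : ℝ) ≤ 2 * X ^ 2 := by
      have h1 : (1 : ℝ) * 1 ≤ X * X := mul_le_mul hX1 hX1 (by norm_num) (by linarith)
      have h2 : X ^ 2 = X * X := sq X
      linarith
    rw [hnR]
    linarith
  -- build the generating set
  obtain ⟨A, C, hC0, hCsym, hcA, hcC, hRot, hRefl⟩ := exists_good_sets q hqprime hq3
  haveI : NeZero n := ⟨hnpos.ne'⟩
  have hCd : C.card ≤ d := le_trans hcC (by omega)
  have hA_le : A.card ≤ d - C.card := by
    have := hcC
    omega
  have h_le_univ : d - C.card ≤ (Finset.univ : Finset (ZMod n)).card := by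
    rw [Finset.card_univ, ZMod.card]
    omega
  obtain ⟨A', hAA', _, hcardA'⟩ :=
    Finset.exists_subsuperset_card_eq (Finset.subset_univ A) hA_le h_le_univ
  obtain ⟨S, hS1, hSinv, hScard, hScover⟩ :=
    dihedral_cover_aux (n := n) A' C hC0 hCsym
      (fun z hz => by
        rcases hRot z hz with h | ⟨a, ha, b, hb, hab⟩
        · exact Or.inl h
        · exact Or.inr ⟨a, hAA' ha, b, hAA' hb, hab⟩)
      (fun z => by
        rcases hRefl z with h | ⟨a, ha, c, hc, hac⟩
        · exact Or.inl (hAA' h)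
        · exact Or.inr ⟨a, hAA' ha, c, hc, hac⟩)
  refine ⟨n, hnpos, ?_, S, hS1, hSinv, ?_, hScover⟩
  · refine le_trans hmain (le_of_eq ?_)
    push_cast
    ring
  · rw [hScard, hcardA']
    omega
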